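/- Let f : ℂ → ℂ be continuous on an open set U ⊆ ℂ and complex differentiable at every point of U \ X, where X ⊆ U is a compact countable set with exactly one accumulation point w, and w ∈ X. If △(z₁, z₂, z₃) is a triangle contained in U with w ∉ △(z₁, z₂, z₃), then the integral of f along the closed polygonal path [z₁, z₂, z₃, z₁] equals 0. -/

import Mathlib

open Set Metric MeasureTheory intervalIntegral Filter

/-- The complex line integral of `f` along the segment from `a` to `b`:
`∫_{t ∈ [0,1]} f((1-t)·a + t·b) · (b - a) dt`. -/
noncomputable def segmentIntegral (f : ℂ → ℂ) (a b : ℂ) : ℂ :=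
  ∫ t in (0:ℝ)..1, f ((1 - t) • a + t • b) * (b - a)

/-- The integral of `f` along the closed polygonal path `[z₁, z₂, z₃, z₁]`. -/
noncomputable def triangleIntegral (f : ℂ → ℂ) (z₁ z₂ z₃ : ℂ) : ℂ :=
  segmentIntegral f z₁ z₂ + segmentIntegral f z₂ z₃ + segmentIntegral f z₃ z₁

/-- `w` is an accumulation point of `X`: every neighborhood of `w` contains a
point of `X` other than `w`. -/
def IsAccumulationPoint (w : ℂ) (X : Set ℂ) : Prop :=
  ∀ V ∈ nhds w, ∃ x, x ∈ V ∩ X ∧ x ≠ w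

/-- Derivative of the segment-integral primitive of a holomorphic function on a convex open set. -/
lemma hasDerivAt_primitive {W : Set ℂ} (hWo : IsOpen W) (hWc : Convex ℝ W)
    {f : ℂ → ℂ} (hfd : ∀ z ∈ W, DifferentiableAt ℂ f z)
    {a : ℂ} (ha : a ∈ W) {z₀ : ℂ} (hz₀ : z₀ ∈ W) :
    HasDerivAt (fun z => segmentIntegral f a z) (f z₀) z₀ := by
  have hfW : DifferentiableOn ℂ f W := fun z hz => (hfd z hz).differentiableWithinAt
  have hf_cont : ContinuousOn f W := hfW.continuousOn
  have hderiv_cont : ContinuousOn (deriv f) W :=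
    ((hfW.analyticOnNhd hWo).deriv).continuousOn
  obtain ⟨ε, εpos, hball⟩ : ∃ ε > 0, closedBall z₀ ε ⊆ W :=
    nhds_basis_closedBall.mem_iff.1 (hWo.mem_nhds hz₀)
  set K : Set ℂ := (fun p : ℝ × ℂ => (1 - p.1) • a + p.1 • p.2) ''
      (Icc (0:ℝ) 1 ×ˢ closedBall z₀ ε) with hKdef
  have hK : IsCompact K :=
    (isCompact_Icc.prod (isCompact_closedBall _ _)).image (by fun_prop)
  have hKW : K ⊆ W := by
    rintro _ ⟨⟨t, x⟩, ⟨ht, hx⟩, rfl⟩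
    exact hWc ha (hball hx) (by simp at ht ⊢; linarith [ht.2]) ht.1 (by ring)
  have hmemK : ∀ t ∈ Icc (0:ℝ) 1, ∀ x ∈ closedBall z₀ ε, (1 - t) • a + t • x ∈ K :=
    fun t ht x hx => ⟨(t, x), ⟨ht, hx⟩, rfl⟩
  obtain ⟨M₁, hM₁⟩ := hK.exists_bound_of_continuousOn (hf_cont.mono hKW)
  obtain ⟨M₂, hM₂⟩ := hK.exists_bound_of_continuousOn (hderiv_cont.mono hKW)
  have hcontL : ∀ x : ℂ, Continuous fun t : ℝ => (1 - t) • a + t • x := by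
    intro x; fun_prop
  have hcontF : ∀ x ∈ closedBall z₀ ε,
      ContinuousOn (fun t : ℝ => f ((1 - t) • a + t • x)) (Icc 0 1) := by
    intro x hx
    exact hf_cont.comp (hcontL x).continuousOn
      (fun t ht => hKW (hmemK t ht x hx))
  have hz₀cb : z₀ ∈ closedBall z₀ ε := mem_closedBall_self εpos.le
  have hderC : ContinuousOn (fun t : ℝ => deriv f ((1 - t) • a + t • z₀)) (Icc 0 1) :=
    hderiv_cont.comp (hcontL z₀).continuousOn (fun t ht => hKW (hmemK t ht z₀ hz₀cb))
  have hIsub : Set.uIoc (0:ℝ) 1 ⊆ Icc 0 1 := by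
    rw [Set.uIoc_of_le zero_le_one]; exact Ioc_subset_Icc_self
  have H := intervalIntegral.hasDerivAt_integral_of_dominated_loc_of_deriv_le
    (F := fun x t => f ((1 - t) • a + t • x) * (x - a))
    (F' := fun x t => deriv f ((1 - t) • a + t • x) * (t • 1) * (x - a)
      + f ((1 - t) • a + t • x) * 1)
    (x₀ := z₀) (a := 0) (b := 1) (μ := volume)
    (bound := fun _ => M₂ * 1 * (ε + ‖z₀ - a‖) + M₁) (ball_mem_nhds z₀ εpos)
    ?_ ?_ ?_ ?_ ?_ ?_
  · -- conclude
    have key : ∀ t ∈ Set.uIcc (0:ℝ) 1,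
        HasDerivAt (fun s : ℝ => s • f ((1 - s) • a + s • z₀))
          (deriv f ((1 - t) • a + t • z₀) * (t • 1) * (z₀ - a)
            + f ((1 - t) • a + t • z₀) * 1) t := by
      intro t ht
      rw [Set.uIcc_of_le zero_le_one] at ht
      have hL : HasDerivAt (fun s : ℝ => (1 - s) • a + s • z₀)
          ((-1 : ℝ) • a + (1 : ℝ) • z₀) t :=
        (((hasDerivAt_id t).const_sub 1).smul_const a).add ((hasDerivAt_id t).smul_const z₀)
      have hLW : (1 - t) • a + t • z₀ ∈ W :=
        hWc ha hz₀ (by linarith [ht.2]) ht.1 (by ring)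
      have hcomp : HasDerivAt (f ∘ fun s : ℝ => (1 - s) • a + s • z₀)
          (((-1 : ℝ) • a + (1 : ℝ) • z₀) • deriv f ((1 - t) • a + t • z₀)) t :=
        HasDerivAt.scomp t ((hfd _ hLW).hasDerivAt) hL
      have := (hasDerivAt_id t).smul hcomp
      refine this.congr_deriv ?_
      simp [Complex.real_smul]
      ring
    have hint := H.1
    have := intervalIntegral.integral_eq_sub_of_hasDerivAt key hint
    rw [this] at H
    simpa [segmentIntegral] using H.2
  · -- measurability of F x
    filter_upwards [ball_mem_nhds z₀ εpos] with x hx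
    exact (((hcontF x (ball_subset_closedBall hx)).mul continuousOn_const).mono
      hIsub).aestronglyMeasurable measurableSet_uIoc
  · -- integrability of F z₀
    apply ContinuousOn.intervalIntegrable
    rw [Set.uIcc_of_le zero_le_one]
    exact (hcontF z₀ hz₀cb).mul continuousOn_const
  · -- measurability of F' z₀
    have : ContinuousOn (fun t : ℝ => deriv f ((1 - t) • a + t • z₀) * (t • 1) * (z₀ - a)
        + f ((1 - t) • a + t • z₀) * 1) (Icc 0 1) :=
      ((hderC.mul (by fun_prop : Continuous fun t : ℝ => (t • (1:ℂ))).continuousOn).mul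
        continuousOn_const).add ((hcontF z₀ hz₀cb).mul continuousOn_const)
    exact (this.mono hIsub).aestronglyMeasurable measurableSet_uIoc
  · -- bound
    filter_upwards with t
    intro ht x hx
    have ht' : t ∈ Icc (0:ℝ) 1 := hIsub ht
    have hpK : (1 - t) • a + t • x ∈ K := hmemK t ht' x (ball_subset_closedBall hx)
    have h1 : ‖(t • (1:ℂ))‖ ≤ 1 := by
      rw [norm_smul]; simp [abs_le]; exact ⟨by linarith [ht'.1], ht'.2⟩
    have h2 : ‖x - a‖ ≤ ε + ‖z₀ - a‖ := by
      have hxz : ‖x - z₀‖ ≤ ε := by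
        rw [← dist_eq_norm]; exact (mem_ball.1 hx).le
      calc ‖x - a‖ = ‖(x - z₀) + (z₀ - a)‖ := by ring_nf
        _ ≤ ‖x - z₀‖ + ‖z₀ - a‖ := norm_add_le _ _
        _ ≤ ε + ‖z₀ - a‖ := by linarith
    calc ‖deriv f ((1 - t) • a + t • x) * (t • 1) * (x - a)
          + f ((1 - t) • a + t • x) * 1‖
        ≤ ‖deriv f ((1 - t) • a + t • x)‖ * ‖(t • (1:ℂ))‖ * ‖x - a‖
          + ‖f ((1 - t) • a + t • x)‖ * 1 := by
          refine (norm_add_le _ _).trans ?_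
          simp [norm_mul]
      _ ≤ M₂ * 1 * (ε + ‖z₀ - a‖) + M₁ := by
          have hd2 : ‖deriv f ((1 - t) • a + t • x)‖ ≤ M₂ := hM₂ _ hpK
          have hf1 : ‖f ((1 - t) • a + t • x)‖ ≤ M₁ := hM₁ _ hpK
          have h0 : (0:ℝ) ≤ M₂ := (norm_nonneg _).trans hd2
          have hεz : (0:ℝ) ≤ ε + ‖z₀ - a‖ := by positivity
          have hmain : ‖deriv f ((1 - t) • a + t • x)‖ * ‖(t • (1:ℂ))‖ * ‖x - a‖
              ≤ M₂ * 1 * (ε + ‖z₀ - a‖) :=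
            mul_le_mul (mul_le_mul hd2 h1 (norm_nonneg _) h0) h2 (norm_nonneg _)
              (by nlinarith)
          simp only [mul_one] at hmain ⊢
          exact add_le_add hmain hf1
  · exact intervalIntegrable_const
  · -- differentiability in x
    filter_upwards with t
    intro ht x hx
    have ht' : t ∈ Icc (0:ℝ) 1 := hIsub ht
    have hLW : (1 - t) • a + t • x ∈ W := hKW (hmemK t ht' x (ball_subset_closedBall hx))
    have hinner : HasDerivAt (fun y : ℂ => (1 - t) • a + t • y) ((t : ℝ) • (1:ℂ)) x :=
      ((hasDerivAt_id x).const_smul t).const_add ((1 - t) • a)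
    have houter : HasDerivAt f (deriv f ((1 - t) • a + t • x)) ((1 - t) • a + t • x) :=
      (hfd _ hLW).hasDerivAt
    have hcomp : HasDerivAt (fun y : ℂ => f ((1 - t) • a + t • y))
        (deriv f ((1 - t) • a + t • x) * (t • 1)) x := houter.comp x hinner
    exact hcomp.mul ((hasDerivAt_id x).sub_const a)

/-- Fundamental theorem of calculus for segment integrals. -/
lemma segmentIntegral_eq_sub {W : Set ℂ} (hWc : Convex ℝ W) {f F : ℂ → ℂ}
    (hF : ∀ z ∈ W, HasDerivAt F (f z) z) (hf_cont : ContinuousOn f W)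
    {a b : ℂ} (ha : a ∈ W) (hb : b ∈ W) :
    segmentIntegral f a b = F b - F a := by
  have hmem : ∀ t ∈ Icc (0:ℝ) 1, (1 - t) • a + t • b ∈ W :=
    fun t ht => hWc ha hb (by linarith [ht.2]) ht.1 (by ring)
  have key : ∀ t ∈ Set.uIcc (0:ℝ) 1,
      HasDerivAt (fun s : ℝ => F ((1 - s) • a + s • b))
        (f ((1 - t) • a + t • b) * (b - a)) t := by
    intro t ht
    rw [Set.uIcc_of_le zero_le_one] at ht
    have hL : HasDerivAt (fun s : ℝ => (1 - s) • a + s • b)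
        ((-1 : ℝ) • a + (1 : ℝ) • b) t :=
      (((hasDerivAt_id t).const_sub 1).smul_const a).add ((hasDerivAt_id t).smul_const b)
    have : HasDerivAt (F ∘ fun s : ℝ => (1 - s) • a + s • b)
        (((-1 : ℝ) • a + (1 : ℝ) • b) • f ((1 - t) • a + t • b)) t :=
      HasDerivAt.scomp t (hF _ (hmem t ht)) hL
    refine this.congr_deriv ?_
    simp [Complex.real_smul]
    ring
  have hint : IntervalIntegrable (fun t => f ((1 - t) • a + t • b) * (b - a)) volume 0 1 := by
    apply ContinuousOn.intervalIntegrable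
    rw [Set.uIcc_of_le zero_le_one]
    exact (hf_cont.comp (by fun_prop : Continuous fun t : ℝ => (1 - t) • a + t • b).continuousOn
      hmem).mul continuousOn_const
  have := intervalIntegral.integral_eq_sub_of_hasDerivAt key hint
  rw [segmentIntegral, this]
  norm_num

theorem stmt_4 (f : ℂ → ℂ) (U : Set ℂ) (hU : IsOpen U)
    (hf : ContinuousOn f U) (X : Set ℂ) (hXU : X ⊆ U)
    (hXcomp : IsCompact X) (hXcount : X.Countable)
    (w : ℂ) (hacc : {p | IsAccumulationPoint p X} = {w}) (hwX : w ∈ X)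
    (hd : ∀ z ∈ U \ X, DifferentiableAt ℂ f z)
    (z₁ z₂ z₃ : ℂ) (htri : convexHull ℝ {z₁, z₂, z₃} ⊆ U)
    (hwout : w ∉ convexHull ℝ {z₁, z₂, z₃}) :
    triangleIntegral f z₁ z₂ z₃ = 0 := by
  set T := convexHull ℝ {z₁, z₂, z₃} with hTdef
  have hz₁T : z₁ ∈ T := subset_convexHull _ _ (by simp)
  have hz₂T : z₂ ∈ T := subset_convexHull _ _ (by simp)
  have hz₃T : z₃ ∈ T := subset_convexHull _ _ (by simp)
  have hTcomp : IsCompact T :=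
    ((Set.finite_singleton z₃).insert z₂ |>.insert z₁).isCompact_convexHull ℝ
  have haccnot : ∀ x : ℂ, x ≠ w → ¬ IsAccumulationPoint x X := by
    intro x hxw h
    exact hxw (by rw [← Set.mem_singleton_iff, ← hacc]; exact h)
  -- closure of X \ T avoids T
  have hsub : closure (X \ T) ⊆ (X \ T) ∪ {w} := by
    intro p hp
    by_cases hpX : p ∈ X \ T
    · exact Or.inl hpX
    · right
      rw [Set.mem_singleton_iff, ← Set.mem_singleton_iff (b := w), ← hacc]
      intro V hV
      obtain ⟨o, hoV, hoopen, hpo⟩ := _root_.mem_nhds_iff.1 hV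
      obtain ⟨y, hy⟩ := mem_closure_iff.1 hp o hoopen hpo
      exact ⟨y, ⟨hoV hy.1, hy.2.1⟩, fun h => hpX (h ▸ hy.2)⟩
  set V := U \ closure (X \ T) with hVdef
  have hVopen : IsOpen V := hU.sdiff isClosed_closure
  have hTV : T ⊆ V := by
    intro p hp
    refine ⟨htri hp, fun hc => ?_⟩
    rcases hsub hc with h | h
    · exact h.2 hp
    · exact hwout (h ▸ hp)
  -- X ∩ T is finite
  have hXT_fin : (X ∩ T).Finite := by
    have hdisc : DiscreteTopology ↥(X ∩ T) := by
      rw [discreteTopology_subtype_iff]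
      intro x hx
      have hxw : x ≠ w := fun h => hwout (h ▸ hx.2)
      have hnacc := haccnot x hxw
      rw [IsAccumulationPoint] at hnacc
      push_neg at hnacc
      obtain ⟨V', hV', hV'p⟩ := hnacc
      rw [← Filter.empty_mem_iff_bot]
      have hmem : (V' \ {x}) ∩ (X ∩ T) ∈ nhdsWithin x {x}ᶜ ⊓ Filter.principal (X ∩ T) :=
        Filter.inter_mem_inf (diff_mem_nhdsWithin_compl hV' {x}) (Filter.mem_principal_self _)
      have h0 : (V' \ {x}) ∩ (X ∩ T) = ∅ := by
        apply Set.eq_empty_iff_forall_notMem.2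
        rintro y ⟨⟨hyV, hyx⟩, hyX, -⟩
        exact hyx (by simp [hV'p y ⟨hyV, hyX⟩])
      exact h0 ▸ hmem
    exact (hXcomp.inter_right hTcomp.isClosed).finite (isDiscrete_iff_discreteTopology.mpr hdisc)
  -- f is differentiable on all of V
  have hVd : ∀ z ∈ V, DifferentiableAt ℂ f z := by
    intro z hz
    by_cases hzX : z ∈ X
    · have hzT : z ∈ T := by
        by_contra h; exact hz.2 (subset_closure ⟨hzX, h⟩)
      apply AnalyticAt.differentiableAt
      apply Complex.analyticAt_of_differentiable_on_punctured_nhds_of_continuousAt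
      · have hopen : IsOpen (V \ ((X ∩ T) \ {z})) :=
          hVopen.sdiff (hXT_fin.subset diff_subset).isClosed
        have hmemz : z ∈ V \ ((X ∩ T) \ {z}) := ⟨hz, fun h => h.2 rfl⟩
        filter_upwards [nhdsWithin_le_nhds (hopen.mem_nhds hmemz), self_mem_nhdsWithin]
          with y hy hyz
        refine hd y ⟨hy.1.1, fun hyX => ?_⟩
        have hyT : y ∈ T := by
          by_contra h; exact hy.1.2 (subset_closure ⟨hyX, h⟩)
        exact hy.2 ⟨⟨hyX, hyT⟩, hyz⟩
      · exact hf.continuousAt (hU.mem_nhds (hXU hzX))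
    · exact hd z ⟨hz.1, hzX⟩
  -- convex open thickening
  obtain ⟨δ, hδ, hδsub⟩ := hTcomp.exists_thickening_subset_open hVopen hTV
  set W := thickening δ T with hWdef
  have hWopen : IsOpen W := isOpen_thickening
  have hWconv : Convex ℝ W := (convex_convexHull ℝ _).thickening δ
  have hTW : T ⊆ W := self_subset_thickening hδ T
  have hWd : ∀ z ∈ W, DifferentiableAt ℂ f z := fun z hz => hVd z (hδsub hz)
  have hWcont : ContinuousOn f W := fun z hz => ((hWd z hz).continuousAt).continuousWithinAt
  have hFd : ∀ z ∈ W, HasDerivAt (fun z => segmentIntegral f z₁ z) (f z) z :=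
    fun z hz => hasDerivAt_primitive hWopen hWconv hWd (hTW hz₁T) hz
  have h12 := segmentIntegral_eq_sub hWconv hFd hWcont (hTW hz₁T) (hTW hz₂T)
  have h23 := segmentIntegral_eq_sub hWconv hFd hWcont (hTW hz₂T) (hTW hz₃T)
  have h31 := segmentIntegral_eq_sub hWconv hFd hWcont (hTW hz₃T) (hTW hz₁T)
  rw [triangleIntegral, h12, h23, h31]
  ring
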